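/- For every λ ≡ 0 (mod 6) and every v ≥ 3, there exists a 2-(v,3,λ) triple system admitting a zero-sum 3-flow. -/

import Mathlib

open Finset

variable {u : ℕ}

/-- the block `{i, i+d, i+2d}` in `ZMod u`. -/
def blk (d i : ZMod u) : Finset (ZMod u) := {i, i + d, i + 2*d}

lemma two_cancel {h : ZMod u} (hh : 2*h = 1) {c : ZMod u} (hc : 2*c = 0) : c = 0 := by
  have h0 : h * (2*c) = 0 := by rw [hc, mul_zero]
  calc c = (2*h)*c := by rw [hh, one_mul]
  _ = h*(2*c) := by ring
  _ = 0 := h0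

lemma count6 [NeZero u] {h : ZMod u} (hh : 2*h = 1) {x y : ZMod u} (hxy : x ≠ y) :
    (univ.filter (fun p : ZMod u × ZMod u =>
      p.1 ≠ 0 ∧ x ∈ blk p.1 p.2 ∧ y ∈ blk p.1 p.2)).card = 6 := by
  have hc : y - x ≠ 0 := sub_ne_zero.mpr (Ne.symm hxy)
  have hc' : x - y ≠ 0 := sub_ne_zero.mpr hxy
  have e1 : ∀ c : ZMod u, 2*(h*c) = c := fun c => by rw [← mul_assoc, hh, one_mul]
  have h2c : 2*(y-x) ≠ 0 := fun H => hc (two_cancel hh H)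
  have h2c' : 2*(x-y) ≠ 0 := fun H => hc' (two_cancel hh H)
  have k3 : h*(y-x) ≠ y-x := fun H => hc (by linear_combination (-2)*H + e1 (y-x))
  have k3' : h*(x-y) ≠ x-y := fun H => hc' (by linear_combination (-2)*H + e1 (x-y))
  have k5 : h*(y-x) ≠ h*(x-y) := by
    intro H
    apply h2c
    have : 2*(h*(y-x)) = 2*(h*(x-y)) := by rw [H]
    linear_combination this - e1 (y-x) + e1 (x-y)
  have hset : (univ.filter (fun p : ZMod u × ZMod u =>
      p.1 ≠ 0 ∧ x ∈ blk p.1 p.2 ∧ y ∈ blk p.1 p.2)) =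
      ({(y-x, x), (y-x, 2*x-y), (h*(y-x), x), (x-y, y), (x-y, 2*y-x), (h*(x-y), y)} :
        Finset (ZMod u × ZMod u)) := by
    ext ⟨d, i⟩
    simp only [mem_filter, mem_univ, true_and, blk, mem_insert, mem_singleton, Prod.mk.injEq]
    constructor
    · rintro ⟨hd, (hx | hx | hx), (hy | hy | hy)⟩
      · exact absurd (hx.trans hy.symm) hxy
      · exact Or.inl ⟨by linear_combination hx - hy, hx.symm⟩
      · refine Or.inr (Or.inr (Or.inl ⟨?_, hx.symm⟩))
        linear_combination (-h)*hy + h*hx + (-d)*hh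
      · exact Or.inr (Or.inr (Or.inr (Or.inl ⟨by linear_combination hy - hx, hy.symm⟩)))
      · exact absurd (hx.trans hy.symm) hxy
      · exact Or.inr (Or.inl ⟨by linear_combination hx - hy, by linear_combination hy - 2*hx⟩)
      · refine Or.inr (Or.inr (Or.inr (Or.inr (Or.inr ⟨?_, hy.symm⟩))))
        linear_combination (-h)*hx + h*hy + (-d)*hh
      · exact Or.inr (Or.inr (Or.inr (Or.inr (Or.inl
          ⟨by linear_combination hy - hx, by linear_combination hx - 2*hy⟩))))
      · exact absurd (hx.trans hy.symm) hxy
    · rintro (⟨hd, hi⟩ | ⟨hd, hi⟩ | ⟨hd, hi⟩ | ⟨hd, hi⟩ | ⟨hd, hi⟩ | ⟨hd, hi⟩)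
      · exact ⟨fun H => hc (by linear_combination H - hd), Or.inl (by linear_combination -hi),
          Or.inr (Or.inl (by linear_combination -hd - hi))⟩
      · exact ⟨fun H => hc (by linear_combination H - hd),
          Or.inr (Or.inl (by linear_combination -hi - hd)),
          Or.inr (Or.inr (by linear_combination -hi - 2*hd))⟩
      · exact ⟨fun H => hc (by linear_combination 2*H - 2*hd - e1 (y-x)),
          Or.inl (by linear_combination -hi),
          Or.inr (Or.inr (by linear_combination -hi - 2*hd - e1 (y-x)))⟩
      · exact ⟨fun H => hc' (by linear_combination H - hd),
          Or.inr (Or.inl (by linear_combination -hi - hd)), Or.inl (by linear_combination -hi)⟩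
      · exact ⟨fun H => hc' (by linear_combination H - hd),
          Or.inr (Or.inr (by linear_combination -hi - 2*hd)),
          Or.inr (Or.inl (by linear_combination -hi - hd))⟩
      · exact ⟨fun H => hc' (by linear_combination 2*H - 2*hd - e1 (x-y)),
          Or.inr (Or.inr (by linear_combination -hi - 2*hd - e1 (x-y))),
          Or.inl (by linear_combination -hi)⟩
  rw [hset]
  rw [card_insert_of_notMem ?n1, card_insert_of_notMem ?n2, card_insert_of_notMem ?n3,
    card_insert_of_notMem ?n4, card_insert_of_notMem ?n5, card_singleton]
  case n5 =>
    simp only [mem_singleton, Prod.mk.injEq]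
    rintro ⟨H1, H2⟩; exact hc (by linear_combination H2)
  case n4 =>
    simp only [mem_insert, mem_singleton, Prod.mk.injEq]
    rintro (⟨H1, H2⟩ | ⟨H1, H2⟩)
    · exact hc (by linear_combination -H2)
    · exact k3' (by linear_combination -H1)
  case n3 =>
    simp only [mem_insert, mem_singleton, Prod.mk.injEq]
    rintro (⟨H1, H2⟩ | ⟨H1, H2⟩ | ⟨H1, H2⟩)
    · exact hxy (by linear_combination H2)
    · exact h2c (by linear_combination -H2)
    · exact k5 (by linear_combination H1)
  case n2 =>
    simp only [mem_insert, mem_singleton, Prod.mk.injEq]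
    rintro (⟨H1, H2⟩ | ⟨H1, H2⟩ | ⟨H1, H2⟩ | ⟨H1, H2⟩)
    · exact hxy (by linear_combination H2)
    · exact h2c (by linear_combination H1)
    · exact h2c (by linear_combination H1)
    · exact h2c' (by linear_combination H2)
  case n1 =>
    simp only [mem_insert, mem_singleton, Prod.mk.injEq]
    rintro (⟨H1, H2⟩ | ⟨H1, H2⟩ | ⟨H1, H2⟩ | ⟨H1, H2⟩ | ⟨H1, H2⟩)
    · exact hc (by linear_combination H2)
    · exact k3 (by linear_combination -H1)
    · exact h2c (by linear_combination H1)
    · exact h2c (by linear_combination -H2)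
    · exact hxy (by linear_combination H2)


variable {u : ℕ}

lemma card3 {α : Type*} [DecidableEq α] {a b c : α} (h1 : a ≠ b) (h2 : a ≠ c) (h3 : b ≠ c) :
    ({a, b, c} : Finset α).card = 3 := by
  rw [Finset.card_insert_of_notMem (by simp [h1, h2]),
    Finset.card_insert_of_notMem (by simp [h3]), Finset.card_singleton]

lemma half_exists (hu : Odd u) : ∃ h : ZMod u, 2*h = 1 := by
  obtain ⟨m, hm⟩ := hu
  refine ⟨((m+1 : ℕ) : ZMod u), ?_⟩
  have h1 : ((2*(m+1) : ℕ) : ZMod u) = ((u : ℕ) : ZMod u) + 1 := by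
    rw [show 2*(m+1) = u + 1 by omega]; push_cast; ring
  rw [ZMod.natCast_self, zero_add] at h1
  rw [← h1]; push_cast; ring

lemma blk_card {h : ZMod u} (hh : 2*h = 1) {d : ZMod u} (hd : d ≠ 0) (i : ZMod u) :
    (blk d i).card = 3 := by
  have h2d : 2*d ≠ 0 := fun H => hd (two_cancel hh H)
  refine card3 ?_ ?_ ?_
  · intro H; exact hd (by linear_combination -H)
  · intro H; exact h2d (by linear_combination -H)
  · intro H; exact hd (by linear_combination -H)

lemma filter_blk [NeZero u] {h : ZMod u} (hh : 2*h = 1) {d : ZMod u} (hd : d ≠ 0) (p : ZMod u) :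
    univ.filter (fun i => p ∈ blk d i) = ({p, p - d, p - 2*d} : Finset (ZMod u)) := by
  ext i
  simp only [mem_filter, mem_univ, true_and, blk, mem_insert, mem_singleton]
  constructor
  · rintro (H | H | H)
    · exact Or.inl H.symm
    · exact Or.inr (Or.inl (by linear_combination -H))
    · exact Or.inr (Or.inr (by linear_combination -H))
  · rintro (H | H | H)
    · exact Or.inl H.symm
    · exact Or.inr (Or.inl (by linear_combination -H))
    · exact Or.inr (Or.inr (by linear_combination -H))

lemma filter_blk_card [NeZero u] {h : ZMod u} (hh : 2*h = 1) {d : ZMod u} (hd : d ≠ 0)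
    (p : ZMod u) : (univ.filter (fun i => p ∈ blk d i)).card = 3 := by
  have h2d : 2*d ≠ 0 := fun H => hd (two_cancel hh H)
  rw [filter_blk hh hd p]
  refine card3 ?_ ?_ ?_
  · intro H; exact hd (by linear_combination H)
  · intro H; exact h2d (by linear_combination H)
  · intro H; exact hd (by linear_combination H)

/-- sign function pairing d with -d -/
def sgn (d : ZMod u) : ℤ := if d.val < (-d).val then 1 else -1

lemma sgn_vals (d : ZMod u) : sgn d ≠ 0 ∧ |sgn d| ≤ 2 := by
  unfold sgn; split_ifs <;> norm_num

lemma sgn_sum [NeZero u] {h : ZMod u} (hh : 2*h = 1) :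
    ∑ d ∈ univ.filter (fun d : ZMod u => d ≠ 0), sgn d = 0 := by
  apply Finset.sum_involution (fun d _ => -d)
  · intro d hd
    simp only [mem_filter, mem_univ, true_and] at hd
    have hne : d ≠ -d := fun H => hd (two_cancel hh (by linear_combination H))
    have hv : d.val ≠ (-d).val := fun H => hne (ZMod.val_injective u H)
    simp only [sgn, neg_neg]
    split_ifs <;> omega
  · intro d hd _
    intro H
    simp only [mem_filter, mem_univ, true_and] at hd
    exact hd (two_cancel hh (by linear_combination -H))
  · intro d hd; exact neg_neg d
  · intro d hd
    simp only [mem_filter, mem_univ, true_and, neg_ne_zero] at hd ⊢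
    exact hd


/-- a TS(v,6) with a zero-sum 3-flow, packaged over `Fin`. -/
def good (v : ℕ) : Prop := ∃ (b : ℕ) (B : Fin b → Finset (Fin v)),
  (∀ i, (B i).card = 3) ∧
  (∀ x y : Fin v, x ≠ y → (Finset.univ.filter (fun i => x ∈ B i ∧ y ∈ B i)).card = 6) ∧
  ∃ f : Fin b → ℤ, (∀ i, f i ≠ 0 ∧ |f i| ≤ 2) ∧
    ∀ x : Fin v, ∑ i ∈ Finset.univ.filter (fun i => x ∈ B i), f i = 0

lemma good_of (v : ℕ) {P I : Type} [Fintype P] [DecidableEq P] [Fintype I]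
    (hP : Fintype.card P = v) (B : I → Finset P) (f : I → ℤ)
    (h3 : ∀ i, (B i).card = 3)
    (hpair : ∀ x y : P, x ≠ y → (univ.filter (fun i => x ∈ B i ∧ y ∈ B i)).card = 6)
    (hf : ∀ i, f i ≠ 0 ∧ |f i| ≤ 2)
    (hflow : ∀ x : P, ∑ i ∈ univ.filter (fun i => x ∈ B i), f i = 0) : good v := by
  classical
  let ep : P ≃ Fin v := Fintype.equivFinOfCardEq hP
  let e : Fin (Fintype.card I) ≃ I := (Fintype.equivFin I).symm
  refine ⟨Fintype.card I, fun m => (B (e m)).map ep.toEmbedding, fun m => by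
    rw [Finset.card_map]; exact h3 _, fun x y hxy => ?_, fun m => f (e m), fun m => hf _,
    fun x => ?_⟩
  · have hxy' : ep.symm x ≠ ep.symm y := fun H => hxy (by simpa using congrArg ep H)
    rw [← hpair _ _ hxy']
    apply Finset.card_bij (fun m _ => e m)
    · intro a ha
      simp only [mem_filter, mem_univ, true_and, Finset.mem_map_equiv] at ha ⊢
      exact ha
    · intro a1 h1 a2 h2 H
      exact e.injective H
    · intro i hi
      refine ⟨e.symm i, ?_, by simp⟩
      simp only [mem_filter, mem_univ, true_and, Finset.mem_map_equiv, Equiv.apply_symm_apply] at hi ⊢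
      exact hi
  · rw [← hflow (ep.symm x)]
    apply Finset.sum_bij (fun m _ => e m)
    · intro a ha
      simp only [mem_filter, mem_univ, true_and, Finset.mem_map_equiv] at ha ⊢
      exact ha
    · intro a1 h1 a2 h2 H
      exact e.injective H
    · intro i hi
      refine ⟨e.symm i, ?_, by simp⟩
      simp only [mem_filter, mem_univ, true_and, Finset.mem_map_equiv, Equiv.apply_symm_apply] at hi ⊢
      exact hi
    · intro a ha; rfl

lemma good_stmt {v : ℕ} (hg : good v) (k : ℕ) :
    ∃ (b : ℕ) (B : Fin b → Finset (Fin v)),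
      (∀ i, (B i).card = 3) ∧
      (∀ x y : Fin v, x ≠ y →
        (Finset.univ.filter (fun i => x ∈ B i ∧ y ∈ B i)).card = 6 * k) ∧
      ∃ f : Fin b → ℤ, (∀ i, f i ≠ 0 ∧ |f i| ≤ 2) ∧
        ∀ x : Fin v, ∑ i ∈ Finset.univ.filter (fun i => x ∈ B i), f i = 0 := by
  obtain ⟨b, B, h3, hpair, f, hf, hflow⟩ := hg
  let e : Fin b × Fin k ≃ Fin (b * k) := finProdFinEquiv
  refine ⟨b * k, fun m => B (e.symm m).1, fun m => h3 _, fun x y hxy => ?_,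
    fun m => f (e.symm m).1, fun m => hf _, fun x => ?_⟩
  · have key : (univ.filter (fun p : Fin b × Fin k => x ∈ B p.1 ∧ y ∈ B p.1)) =
        (univ.filter (fun i => x ∈ B i ∧ y ∈ B i)) ×ˢ univ := by
      ext ⟨i, j⟩; simp [Finset.mem_product]
    have : (univ.filter (fun m : Fin (b*k) => x ∈ B (e.symm m).1 ∧ y ∈ B (e.symm m).1)).card
        = (univ.filter (fun p : Fin b × Fin k => x ∈ B p.1 ∧ y ∈ B p.1)).card := by
      apply Finset.card_bij (fun m _ => e.symm m)
      · intro a ha; simpa using ha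
      · intro a1 h1 a2 h2 H; exact e.symm.injective H
      · intro p hp; exact ⟨e p, by simpa using hp, by simp⟩
    rw [this, key, Finset.card_product, hpair x y hxy, card_univ, Fintype.card_fin, mul_comm]
  · have : ∑ m ∈ univ.filter (fun m : Fin (b*k) => x ∈ B (e.symm m).1), f (e.symm m).1
        = ∑ p ∈ univ.filter (fun p : Fin b × Fin k => x ∈ B p.1), f p.1 := by
      apply Finset.sum_bij (fun m _ => e.symm m)
      · intro a ha; simpa using ha
      · intro a1 h1 a2 h2 H; exact e.symm.injective H
      · intro p hp; exact ⟨e p, by simpa using hp, by simp⟩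
      · intro a ha; rfl
    rw [this]
    have key : (univ.filter (fun p : Fin b × Fin k => x ∈ B p.1)) =
        (univ.filter (fun i => x ∈ B i)) ×ˢ univ := by
      ext ⟨i, j⟩; simp [Finset.mem_product]
    rw [key, Finset.sum_product]
    simp only [Finset.sum_const, card_univ, Fintype.card_fin, nsmul_eq_mul]
    rw [← Finset.mul_sum, hflow, mul_zero]

lemma good_odd (n : ℕ) (hn : Odd n) (hn3 : 3 ≤ n) : good n := by
  haveI : NeZero n := ⟨by omega⟩
  obtain ⟨h, hh⟩ := half_exists hn
  apply good_of n (P := ZMod n) (I := {d : ZMod n // d ≠ 0} × ZMod n) (ZMod.card n)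
    (fun q => blk q.1.1 q.2) (fun q => sgn q.1.1)
  · exact fun q => blk_card hh q.1.2 q.2
  · intro x y hxy
    rw [← count6 hh hxy]
    apply Finset.card_bij (fun (q : {d : ZMod n // d ≠ 0} × ZMod n) _ => (q.1.1, q.2))
    · intro a ha
      simp only [mem_filter, mem_univ, true_and] at ha ⊢
      exact ⟨a.1.2, ha⟩
    · intro a1 h1 a2 h2 H
      obtain ⟨H1, H2⟩ := Prod.mk.injEq .. ▸ H
      exact Prod.ext (Subtype.ext H1) H2
    · intro p hp
      simp only [mem_filter, mem_univ, true_and] at hp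
      exact ⟨⟨⟨p.1, hp.1⟩, p.2⟩, by simp only [mem_filter, mem_univ, true_and]; exact hp.2, rfl⟩
  · exact fun q => sgn_vals _
  · intro p
    rw [Finset.sum_filter, Fintype.sum_prod_type]
    have inner : ∀ dq : {d : ZMod n // d ≠ 0},
        (∑ i : ZMod n, if p ∈ blk dq.1 i then sgn dq.1 else 0) = 3 * sgn dq.1 := by
      intro dq
      rw [← Finset.sum_filter, Finset.sum_const, filter_blk_card hh dq.2 p]
      push_cast [nsmul_eq_mul]
      ring
    rw [Finset.sum_congr rfl (fun dq _ => inner dq), ← Finset.mul_sum]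
    have hsub := Finset.sum_subtype (p := fun d : ZMod n => d ≠ 0) (F := inferInstance)
      (univ.filter (fun d : ZMod n => d ≠ 0)) (fun x => by simp) sgn
    rw [← hsub, sgn_sum hh, mul_zero]

section even
variable {u : ℕ}

/-- third points of the three infinity families -/
def ee : Fin 3 → ZMod u := ![1, 1, 2]
def xx : Fin 3 → ℤ := ![-1, -1, 2]

/-- weight on finite families, for the even construction -/
def w (d : ZMod u) : ℤ := if d = -1 then 2 else if d = 2 ∨ d = -2 then -1 else sgn d

lemma w_vals (d : ZMod u) : w d ≠ 0 ∧ |w d| ≤ 2 := by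
  unfold w sgn; split_ifs <;> norm_num

lemma xx_vals (j : Fin 3) : xx j ≠ 0 ∧ |xx j| ≤ 2 := by
  fin_cases j <;> simp [xx] <;> norm_num

lemma xx_sum : xx 0 + xx 1 + xx 2 = 0 := by simp [xx]

lemma sgn_sum_symm [NeZero u] {h : ZMod u} (hh : 2*h = 1) (S : Finset (ZMod u))
    (h0 : (0 : ZMod u) ∉ S) (hsym : ∀ d ∈ S, -d ∈ S) : ∑ d ∈ S, sgn d = 0 := by
  apply Finset.sum_involution (fun d _ => -d)
  · intro d hd
    have hd0 : d ≠ 0 := fun H => h0 (H ▸ hd)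
    have hne : d ≠ -d := fun H => hd0 (two_cancel hh (by linear_combination H))
    have hv : d.val ≠ (-d).val := fun H => hne (ZMod.val_injective u H)
    simp only [sgn, neg_neg]
    split_ifs <;> omega
  · intro d hd _ H
    have hd0 : d ≠ 0 := fun H' => h0 (H' ▸ hd)
    exact hd0 (two_cancel hh (by linear_combination -H))
  · intro d hd; exact neg_neg d
  · intro d hd; exact hsym d hd

lemma w_sum [NeZero u] {h : ZMod u} (hh : 2*h = 1) (hu5 : 5 ≤ u) :
    ∑ d ∈ univ.filter (fun d : ZMod u => d ≠ 0 ∧ d ≠ 1), w d = 0 := by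
  have fne : ∀ m : ℕ, 0 < m → m < u → ((m : ℕ) : ZMod u) ≠ 0 := by
    intro m hm hmu H
    rw [ZMod.natCast_eq_zero_iff] at H
    have := Nat.le_of_dvd hm H
    omega
  have f1 : (1 : ZMod u) ≠ 0 := by have := fne 1 (by omega) (by omega); push_cast at this; exact this
  have f2 : (2 : ZMod u) ≠ 0 := by have := fne 2 (by omega) (by omega); push_cast at this; exact this
  have f3 : (3 : ZMod u) ≠ 0 := by have := fne 3 (by omega) (by omega); push_cast at this; exact this
  have f4 : (4 : ZMod u) ≠ 0 := by have := fne 4 (by omega) (by omega); push_cast at this; exact this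
  set S := univ.filter (fun d : ZMod u => d ≠ 0 ∧ d ≠ 1) with hS
  set S' := univ.filter (fun d : ZMod u =>
    (d ≠ 0 ∧ d ≠ 1) ∧ d ≠ -1 ∧ d ≠ 2 ∧ d ≠ -2) with hS'
  have key : S = insert (-1) (insert 2 (insert (-2) S')) := by
    ext d
    simp only [hS, hS', mem_insert, mem_filter, mem_univ, true_and]
    constructor
    · intro hd
      by_cases e1 : d = -1
      · exact Or.inl e1
      by_cases e2 : d = 2
      · exact Or.inr (Or.inl e2)
      by_cases e3 : d = -2
      · exact Or.inr (Or.inr (Or.inl e3))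
      · exact Or.inr (Or.inr (Or.inr ⟨hd, e1, e2, e3⟩))
    · rintro (rfl | rfl | rfl | ⟨hd, _⟩)
      · exact ⟨fun H => f1 (by linear_combination -H), fun H => f2 (by linear_combination -H)⟩
      · exact ⟨f2, fun H => f1 (by linear_combination H)⟩
      · exact ⟨fun H => f2 (by linear_combination -H), fun H => f3 (by linear_combination -H)⟩
      · exact hd
  have n1 : (-1 : ZMod u) ∉ insert 2 (insert (-2) S') := by
    simp only [mem_insert, hS', mem_filter, mem_univ, true_and]
    rintro (H | H | ⟨_, H, _⟩)
    · exact f3 (by linear_combination -H)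
    · exact f1 (by linear_combination H)
    · exact H rfl
  have n2 : (2 : ZMod u) ∉ insert (-2) S' := by
    simp only [mem_insert, hS', mem_filter, mem_univ, true_and]
    rintro (H | ⟨_, _, H, _⟩)
    · exact f4 (by linear_combination H)
    · exact H rfl
  have n3 : (-2 : ZMod u) ∉ S' := by
    simp only [hS', mem_filter, mem_univ, true_and]
    rintro ⟨_, _, _, H⟩
    exact H rfl
  rw [key, Finset.sum_insert n1, Finset.sum_insert n2, Finset.sum_insert n3]
  have w1 : w (-1 : ZMod u) = 2 := by rw [w, if_pos rfl]
  have w2 : w (2 : ZMod u) = -1 := by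
    rw [w, if_neg, if_pos (Or.inl rfl)]
    intro H; exact f3 (by linear_combination H)
  have w3 : w (-2 : ZMod u) = -1 := by
    rw [w, if_neg, if_pos (Or.inr rfl)]
    intro H; exact f1 (by linear_combination -H)
  have wS' : ∑ d ∈ S', w d = 0 := by
    rw [Finset.sum_congr rfl (g := sgn) ?_]
    · apply sgn_sum_symm hh
      · simp only [hS', mem_filter, mem_univ, true_and]
        rintro ⟨⟨H, _⟩, _⟩; exact H rfl
      · intro d hd
        simp only [hS', mem_filter, mem_univ, true_and] at hd ⊢
        obtain ⟨⟨g0, g1⟩, g2, g3, g4⟩ := hd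
        refine ⟨⟨fun H => g0 (by linear_combination -H), fun H => g2 (by linear_combination -H)⟩,
          fun H => g1 (by linear_combination -H), fun H => g4 (by linear_combination -H),
          fun H => g3 (by linear_combination -H)⟩
    · intro d hd
      simp only [hS', mem_filter, mem_univ, true_and] at hd
      obtain ⟨_, g2, g3, g4⟩ := hd
      rw [w, if_neg g2, if_neg (by rintro (H | H); exacts [g3 H, g4 H])]
  rw [wS', w1, w2, w3]
  ring

end even

section evendesign
variable {u : ℕ}

/-- index type for the even construction -/
abbrev Jt (u : ℕ) := ({d : ZMod u // d ≠ 0 ∧ d ≠ 1} × ZMod u) ⊕ (Fin 3 × ZMod u)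

def eblk : Jt u → Finset (Option (ZMod u))
  | .inl q => {some q.2, some (q.2 + q.1.1), some (q.2 + 2*q.1.1)}
  | .inr q => {none, some q.2, some (q.2 + ee q.1)}

def ef : Jt u → ℤ
  | .inl q => w q.1.1
  | .inr q => xx q.1

lemma ef_vals (j : Jt u) : ef j ≠ 0 ∧ |ef j| ≤ 2 := by
  cases j with
  | inl q => exact w_vals _
  | inr q => exact xx_vals _

lemma ee_ne (f1 : (1 : ZMod u) ≠ 0) (f2 : (2 : ZMod u) ≠ 0) (j : Fin 3) : (ee j : ZMod u) ≠ 0 := by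
  fin_cases j
  · simpa [ee] using f1
  · simpa [ee] using f1
  · simpa [ee] using f2

lemma eblk_card {h : ZMod u} (hh : 2*h = 1) (f1 : (1 : ZMod u) ≠ 0) (f2 : (2 : ZMod u) ≠ 0)
    (j : Jt u) : (eblk j).card = 3 := by
  cases j with
  | inl q =>
    obtain ⟨hd0, _⟩ := q.1.2
    have h2d : 2*(q.1.1 : ZMod u) ≠ 0 := fun H => hd0 (two_cancel hh H)
    refine card3 ?_ ?_ ?_ <;> simp only [ne_eq, Option.some.injEq] <;> intro H
    · exact hd0 (by linear_combination -H)
    · exact h2d (by linear_combination -H)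
    · exact hd0 (by linear_combination -H)
  | inr q =>
    refine card3 (by simp) (by simp) ?_
    simp only [ne_eq, Option.some.injEq]
    intro H
    exact ee_ne f1 f2 q.1 (by linear_combination -H)

lemma count_inf [NeZero u] (f1 : (1 : ZMod u) ≠ 0) (f2 : (2 : ZMod u) ≠ 0) (a : ZMod u) :
    (univ.filter (fun j : Jt u => none ∈ eblk j ∧ some a ∈ eblk j)).card = 6 := by
  have key : (univ.filter (fun j : Jt u => none ∈ eblk j ∧ some a ∈ eblk j)) =
      ({.inr (0, a), .inr (0, a-1), .inr (1, a), .inr (1, a-1), .inr (2, a), .inr (2, a-2)} :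
        Finset (Jt u)) := by
    ext j
    cases j with
    | inl q =>
      simp only [mem_filter, mem_univ, true_and]
      simp [eblk, mem_filter]
    | inr q =>
      obtain ⟨j, i⟩ := q
      simp only [mem_filter, mem_univ, true_and]
      simp only [mem_filter, mem_univ, true_and, eblk, mem_insert, mem_singleton,
        Option.some.injEq, Sum.inr.injEq, Prod.mk.injEq, reduceCtorEq, false_or, true_and]
      fin_cases j <;> simp [ee] <;> constructor <;> rintro (H | H) <;>
        first
          | exact Or.inl H.symm
          | exact Or.inr (by linear_combination -H)
          | exact Or.inr (by linear_combination H)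
  rw [key]
  rw [card_insert_of_notMem ?m1, card_insert_of_notMem ?m2, card_insert_of_notMem ?m3,
    card_insert_of_notMem ?m4, card_insert_of_notMem ?m5, card_singleton]
  case m5 =>
    simp only [mem_singleton, Sum.inr.injEq, Prod.mk.injEq]
    rintro ⟨H1, H2⟩
    exact f2 (by linear_combination H2)
  case m4 =>
    simp only [mem_insert, mem_singleton, Sum.inr.injEq, Prod.mk.injEq]
    rintro (⟨H1, H2⟩ | ⟨H1, H2⟩) <;> exact absurd H1 (by decide)
  case m3 =>
    simp only [mem_insert, mem_singleton, Sum.inr.injEq, Prod.mk.injEq]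
    rintro (⟨H1, H2⟩ | ⟨H1, H2⟩ | ⟨H1, H2⟩) <;>
      first
        | exact absurd H1 (by decide)
        | exact f1 (by linear_combination H2)
        | exact f2 (by linear_combination H2)
  case m2 =>
    simp only [mem_insert, mem_singleton, Sum.inr.injEq, Prod.mk.injEq]
    rintro (⟨H1, H2⟩ | ⟨H1, H2⟩ | ⟨H1, H2⟩ | ⟨H1, H2⟩) <;> exact absurd H1 (by decide)
  case m1 =>
    simp only [mem_insert, mem_singleton, Sum.inr.injEq, Prod.mk.injEq]
    rintro (⟨H1, H2⟩ | ⟨H1, H2⟩ | ⟨H1, H2⟩ | ⟨H1, H2⟩ | ⟨H1, H2⟩) <;>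
      first
        | exact absurd H1 (by decide)
        | exact f1 (by linear_combination H2)
        | exact f2 (by linear_combination H2)

def Gmap : Jt u → ZMod u × ZMod u
  | .inl q => (q.1.1, q.2)
  | .inr q => (1, if q.1 = 1 then q.2 - 1 else q.2)

set_option maxHeartbeats 2000000 in
lemma count_fin [NeZero u] {h : ZMod u} (hh : 2*h = 1) (f1 : (1 : ZMod u) ≠ 0)
    (f2 : (2 : ZMod u) ≠ 0) {a b : ZMod u} (hab : a ≠ b) :
    (univ.filter (fun j : Jt u => some a ∈ eblk j ∧ some b ∈ eblk j)).card = 6 := by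
  rw [← count6 hh hab]
  apply Finset.card_bij (fun (j : Jt u) _ => Gmap j)
  · intro j hj
    cases j with
    | inl q =>
      obtain ⟨⟨d, hd0, hd1⟩, i⟩ := q
      simp only [mem_filter, mem_univ, true_and] at hj
      simp only [mem_filter, mem_univ, true_and, eblk, mem_insert, mem_singleton,
        Option.some.injEq] at hj
      simp only [mem_filter, mem_univ, true_and, Gmap, blk, mem_insert, mem_singleton]
      exact ⟨hd0, hj⟩
    | inr q =>
      obtain ⟨j3, i⟩ := q
      simp only [mem_filter, mem_univ, true_and] at hj
      simp only [mem_filter, mem_univ, true_and, Gmap, blk, mem_insert, mem_singleton]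
      fin_cases j3 <;> simp [eblk, ee] at hj <;> simp [ee, blk] <;> refine ⟨f1, ?_, ?_⟩
      · rcases hj.1 with H | H
        · exact Or.inl H
        · exact Or.inr (Or.inl H)
      · rcases hj.2 with H | H
        · exact Or.inl H
        · exact Or.inr (Or.inl H)
      · rcases hj.1 with H | H
        · exact Or.inr (Or.inl (by linear_combination H))
        · exact Or.inr (Or.inr (by linear_combination H))
      · rcases hj.2 with H | H
        · exact Or.inr (Or.inl (by linear_combination H))
        · exact Or.inr (Or.inr (by linear_combination H))
      · rcases hj.1 with H | H
        · exact Or.inl H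
        · exact Or.inr (Or.inr (by linear_combination H))
      · rcases hj.2 with H | H
        · exact Or.inl H
        · exact Or.inr (Or.inr (by linear_combination H))
  · intro j1 hj1 j2 hj2 H
    cases j1 with
    | inl q1 =>
      cases j2 with
      | inl q2 =>
        obtain ⟨⟨d1, hq1⟩, i1⟩ := q1
        obtain ⟨⟨d2, hq2⟩, i2⟩ := q2
        simp only [Gmap, Prod.mk.injEq] at H
        simp only [Sum.inl.injEq, Prod.mk.injEq, Subtype.mk.injEq]
        exact ⟨H.1, H.2⟩
      | inr q2 =>
        obtain ⟨⟨d1, hd0, hd1⟩, i1⟩ := q1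
        simp only [Gmap, Prod.mk.injEq] at H
        exact absurd H.1 hd1
    | inr q1 =>
      cases j2 with
      | inl q2 =>
        obtain ⟨⟨d2, hd0, hd1⟩, i2⟩ := q2
        simp only [Gmap, Prod.mk.injEq] at H
        exact absurd H.1.symm hd1
      | inr q2 =>
        obtain ⟨j3, i1⟩ := q1
        obtain ⟨j4, i2⟩ := q2
        simp only [mem_filter, mem_univ, true_and] at hj1 hj2
        simp only [mem_filter, mem_univ, true_and, eblk, mem_insert, mem_singleton,
          Option.some.injEq, reduceCtorEq, false_or] at hj1 hj2
        obtain ⟨ha1, hb1⟩ := hj1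
        obtain ⟨ha2, hb2⟩ := hj2
        fin_cases j3 <;> fin_cases j4 <;>
          simp [ee] at ha1 hb1 ha2 hb2 <;>
          simp only [Gmap, Fin.isValue, Fin.zero_eta, Fin.mk_one, Prod.mk.injEq, true_and,
            show ((⟨2, by omega⟩ : Fin 3) : Fin 3) = 2 from rfl, reduceIte,
            show ((0 : Fin 3) = 1) = False from by simp, show ((2 : Fin 3) = 1) = False from by simp,
            show ((1 : Fin 3) = 1) = True from by simp, if_true, if_false] at H <;>
          simp only [Sum.inr.injEq, Prod.mk.injEq, Fin.isValue] <;>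
          first
            | exact ⟨trivial, by linear_combination H⟩
            | linear_combination H
            | (exfalso
               rcases ha1 with A1 | A1 <;> rcases ha2 with A2 | A2 <;>
                 rcases hb1 with B1 | B1 <;> rcases hb2 with B2 | B2 <;>
               first
                 | exact f1 (by linear_combination A1 - A2 + H)
                 | exact f1 (by linear_combination A2 - A1 - H)
                 | exact f1 (by linear_combination B1 - B2 + H)
                 | exact f1 (by linear_combination B2 - B1 - H)
                 | exact f2 (by linear_combination A1 - A2 + H)
                 | exact f2 (by linear_combination A2 - A1 - H)
                 | exact f2 (by linear_combination B1 - B2 + H)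
                 | exact f2 (by linear_combination B2 - B1 - H)
                 | exact f1 (by linear_combination A1 - A2 - H)
                 | exact f1 (by linear_combination A2 - A1 + H)
                 | exact f1 (by linear_combination B1 - B2 - H)
                 | exact f1 (by linear_combination B2 - B1 + H)
                 | exact f2 (by linear_combination A1 - A2 - H)
                 | exact f2 (by linear_combination A2 - A1 + H)
                 | exact f2 (by linear_combination B1 - B2 - H)
                 | exact f2 (by linear_combination B2 - B1 + H)
                 | exact hab (by linear_combination A1 - B2 + H)
                 | exact hab (by linear_combination A1 - B2 - H)
                 | exact hab (by linear_combination A1 - B2)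
                 | exact hab (by linear_combination A1 - B1)
                 | exact hab (by linear_combination A2 - B2)
                 | exact hab (by linear_combination A2 - B1 + H)
                 | exact hab (by linear_combination A2 - B1 - H)
                 | exact hab (by linear_combination A2 - B1))
  · intro p hp
    simp only [mem_filter, mem_univ, true_and, blk, mem_insert, mem_singleton] at hp
    obtain ⟨hd0, hpa, hpb⟩ := hp
    by_cases hd1 : p.1 = 1
    · have memo : ∀ i : ZMod u, ∀ j3 : Fin 3, some a ∈ eblk (.inr (j3, i) : Jt u) ↔
          (a = i ∨ a = i + ee j3) := by intro i j3; simp [eblk]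
      have memo' : ∀ i : ZMod u, ∀ j3 : Fin 3, some b ∈ eblk (.inr (j3, i) : Jt u) ↔
          (b = i ∨ b = i + ee j3) := by intro i j3; simp [eblk]
      have g0 : ∀ i : ZMod u, Gmap (.inr (0, i) : Jt u) = (1, i) := fun i => by simp [Gmap]
      have g1 : ∀ i : ZMod u, Gmap (.inr (1, i) : Jt u) = (1, i - 1) := fun i => by simp [Gmap]
      have g2 : ∀ i : ZMod u, Gmap (.inr (2, i) : Jt u) = (1, i) := fun i => by simp [Gmap]
      have pe : ∀ z : ZMod u, (1, z) = p ↔ z = p.2 := by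
        intro z
        constructor
        · intro H; exact (Prod.mk.injEq .. ▸ H).2
        · intro H; rw [H, ← hd1]
      rcases hpa with A | A | A <;> rcases hpb with B | B | B
      · exact absurd (A.trans B.symm) hab
      · refine ⟨.inr (0, p.2), ?_, ?_⟩
        · simp only [mem_filter, mem_univ, true_and, memo, memo', ee, Matrix.cons_val_zero]
          exact ⟨Or.inl A, Or.inr (by linear_combination B + hd1)⟩
        · rw [g0, pe]
      · refine ⟨.inr (2, p.2), ?_, ?_⟩
        · simp only [mem_filter, mem_univ, true_and, memo, memo', ee, Matrix.cons_val_two,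
            Matrix.tail_cons, Matrix.head_cons]
          exact ⟨Or.inl A, Or.inr (by linear_combination B + 2*hd1)⟩
        · rw [g2, pe]
      · refine ⟨.inr (0, p.2), ?_, ?_⟩
        · simp only [mem_filter, mem_univ, true_and, memo, memo', ee, Matrix.cons_val_zero]
          exact ⟨Or.inr (by linear_combination A + hd1), Or.inl B⟩
        · rw [g0, pe]
      · exact absurd (A.trans B.symm) hab
      · refine ⟨.inr (1, p.2 + 1), ?_, ?_⟩
        · simp only [mem_filter, mem_univ, true_and, memo, memo', ee, Matrix.cons_val_one,
            Matrix.head_cons, Matrix.cons_val_zero]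
          exact ⟨Or.inl (by linear_combination A + hd1), Or.inr (by linear_combination B + 2*hd1)⟩
        · rw [g1, pe]; ring
      · refine ⟨.inr (2, p.2), ?_, ?_⟩
        · simp only [mem_filter, mem_univ, true_and, memo, memo', ee, Matrix.cons_val_two,
            Matrix.tail_cons, Matrix.head_cons]
          exact ⟨Or.inr (by linear_combination A + 2*hd1), Or.inl B⟩
        · rw [g2, pe]
      · refine ⟨.inr (1, p.2 + 1), ?_, ?_⟩
        · simp only [mem_filter, mem_univ, true_and, memo, memo', ee, Matrix.cons_val_one,
            Matrix.head_cons, Matrix.cons_val_zero]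
          exact ⟨Or.inr (by linear_combination A + 2*hd1), Or.inl (by linear_combination B + hd1)⟩
        · rw [g1, pe]; ring
      · exact absurd (A.trans B.symm) hab
    · refine ⟨.inl (⟨p.1, hd0, hd1⟩, p.2), ?_, ?_⟩
      · simp only [mem_filter, mem_univ, true_and]
        simp only [mem_filter, mem_univ, true_and, eblk, mem_insert, mem_singleton,
          Option.some.injEq]
        exact ⟨hpa, hpb⟩
      · simp only [Gmap]

lemma filter_pair_card [NeZero u] {e : ZMod u} (he : e ≠ 0) (p : ZMod u) :
    (univ.filter (fun i : ZMod u => p = i ∨ p = i + e)).card = 2 := by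
  have key : univ.filter (fun i : ZMod u => p = i ∨ p = i + e) = {p, p - e} := by
    ext i
    simp only [mem_filter, mem_univ, true_and, mem_insert, mem_singleton]
    constructor
    · rintro (H | H)
      · exact Or.inl H.symm
      · exact Or.inr (by linear_combination -H)
    · rintro (H | H)
      · exact Or.inl H.symm
      · exact Or.inr (by linear_combination -H)
  rw [key, card_insert_of_notMem, card_singleton]
  simp only [mem_singleton]
  intro H
  exact he (by linear_combination H)

lemma good_even (u : ℕ) (hu : Odd u) (hu5 : 5 ≤ u) : good (u + 1) := by
  haveI : NeZero u := ⟨by omega⟩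
  obtain ⟨h, hh⟩ := half_exists hu
  have fne : ∀ m : ℕ, 0 < m → m < u → ((m : ℕ) : ZMod u) ≠ 0 := by
    intro m hm hmu H
    rw [ZMod.natCast_eq_zero_iff] at H
    have := Nat.le_of_dvd hm H
    omega
  have f1 : (1 : ZMod u) ≠ 0 := by have := fne 1 (by omega) (by omega); push_cast at this; exact this
  have f2 : (2 : ZMod u) ≠ 0 := by have := fne 2 (by omega) (by omega); push_cast at this; exact this
  apply good_of (u+1) (P := Option (ZMod u)) (I := Jt u)
    (by simp [ZMod.card]) eblk ef (eblk_card hh f1 f2) ?_ ef_vals ?_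
  · intro x y hxy
    cases x with
    | none =>
      cases y with
      | none => exact absurd rfl hxy
      | some a => exact count_inf f1 f2 a
    | some a =>
      cases y with
      | none =>
        rw [Finset.filter_congr (fun j _ => (and_comm (a := some a ∈ eblk j)
          (b := none ∈ eblk j)))]
        exact count_inf f1 f2 a
      | some b =>
        have hab : a ≠ b := fun H => hxy (by rw [H])
        exact count_fin hh f1 f2 hab
  · intro x
    cases x with
    | none =>
      rw [Finset.sum_filter, Fintype.sum_sum_type, Fintype.sum_prod_type, Fintype.sum_prod_type]
      have h1 : ∀ (dq : {d : ZMod u // d ≠ 0 ∧ d ≠ 1}) (i : ZMod u),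
          (if (none : Option (ZMod u)) ∈ eblk (.inl (dq, i)) then ef (.inl (dq, i) : Jt u) else 0)
            = 0 := by
        intro dq i
        rw [if_neg]
        simp [eblk]
      have h2 : ∀ (j3 : Fin 3) (i : ZMod u),
          (if (none : Option (ZMod u)) ∈ eblk (.inr (j3, i)) then ef (.inr (j3, i) : Jt u) else 0)
            = xx j3 := by
        intro j3 i
        rw [if_pos]
        · rfl
        · simp [eblk]
      simp only [h1, h2, Finset.sum_const_zero, zero_add, Finset.sum_const, card_univ]
      rw [ZMod.card, Fin.sum_univ_three]
      simp only [xx, Matrix.cons_val_zero, Matrix.cons_val_one, Matrix.head_cons,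
        Matrix.cons_val_two, Matrix.tail_cons, nsmul_eq_mul]
      ring
    | some p =>
      rw [Finset.sum_filter, Fintype.sum_sum_type, Fintype.sum_prod_type, Fintype.sum_prod_type]
      have h1 : ∀ (dq : {d : ZMod u // d ≠ 0 ∧ d ≠ 1}),
          (∑ i : ZMod u, if (some p : Option (ZMod u)) ∈ eblk (.inl (dq, i))
            then ef (.inl (dq, i) : Jt u) else 0) = 3 * w (dq.1 : ZMod u) := by
        intro dq
        have hiff : ∀ i : ZMod u, ((some p : Option (ZMod u)) ∈ eblk (.inl (dq, i))) ↔
            p ∈ blk (dq.1 : ZMod u) i := by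
          intro i
          simp [eblk, blk]
        rw [Finset.sum_congr rfl fun i _ =>
          if_congr (hiff i) (show ef (.inl (dq, i) : Jt u) = w (dq.1 : ZMod u) from rfl) rfl]
        rw [← Finset.sum_filter, Finset.sum_const, filter_blk_card hh dq.2.1 p]
        simp [nsmul_eq_mul]
      have h2 : ∀ (j3 : Fin 3),
          (∑ i : ZMod u, if (some p : Option (ZMod u)) ∈ eblk (.inr (j3, i))
            then ef (.inr (j3, i) : Jt u) else 0) = 2 * xx j3 := by
        intro j3
        have hiff : ∀ i : ZMod u, ((some p : Option (ZMod u)) ∈ eblk (.inr (j3, i))) ↔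
            (p = i ∨ p = i + ee j3) := by
          intro i
          simp [eblk]
        rw [Finset.sum_congr rfl fun i _ =>
          if_congr (hiff i) (show ef (.inr (j3, i) : Jt u) = xx j3 from rfl) rfl]
        rw [← Finset.sum_filter, Finset.sum_const, filter_pair_card (ee_ne f1 f2 j3) p]
        simp [nsmul_eq_mul]
      rw [Finset.sum_congr rfl fun dq _ => h1 dq, Finset.sum_congr rfl fun j3 _ => h2 j3,
        ← Finset.mul_sum]
      have hsub := Finset.sum_subtype (p := fun d : ZMod u => d ≠ 0 ∧ d ≠ 1) (F := inferInstance)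
        (univ.filter (fun d : ZMod u => d ≠ 0 ∧ d ≠ 1)) (fun x => by simp) w
      rw [← hsub, w_sum hh hu5, mul_zero, zero_add, Fin.sum_univ_three]
      norm_num [xx]
      simp

end evendesign

lemma good_four : good 4 := by
  apply good_of 4 (P := Fin 4) (I := Fin 4 × Fin 3) rfl
    (fun q => {q.1}ᶜ) (fun q => if q.2 = 0 then 2 else -1)
  · decide
  · decide
  · decide
  · decide

/-- For every λ ≡ 0 (mod 6) and every v ≥ 3 there exists a
2-(v,3,λ) triple system admitting a zero-sum 3-flow. -/
theorem stmt19 (lam v : ℕ) (h6 : 6 ∣ lam) (hv : 3 ≤ v) :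
    ∃ (b : ℕ) (B : Fin b → Finset (Fin v)),
      (∀ i, (B i).card = 3) ∧
      (∀ x y : Fin v, x ≠ y →
        (Finset.univ.filter (fun i => x ∈ B i ∧ y ∈ B i)).card = lam) ∧
      ∃ f : Fin b → ℤ, (∀ i, f i ≠ 0 ∧ |f i| ≤ 2) ∧
        ∀ x : Fin v, ∑ i ∈ Finset.univ.filter (fun i => x ∈ B i), f i = 0 := by
  obtain ⟨k, rfl⟩ := h6
  have hg : good v := by
    rcases Nat.even_or_odd v with he | ho
    · by_cases h4 : v = 4
      · rw [h4]; exact good_four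
      · obtain ⟨m, hm⟩ := he
        have hv1 : v - 1 + 1 = v := by omega
        rw [← hv1]
        apply good_even
        · exact ⟨m - 1, by omega⟩
        · omega
    · exact good_odd v ho hv
  exact good_stmt hg k
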